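/- Let t ≥ k ≥ 2 and let φ : [n]^{(k-1)} → [t-k+1] be any colouring. Define the k-uniform hypergraph R(φ) on [n] whose edges are the k-sets {v₁ < … < v_k} with φ({v₂,…,v_k}) ≠ φ({v₁, v₃,…,v_k}). Then R(φ) contains no clique on t vertices. -/

import Mathlib

/-- Fact 7.3 (freeness of the construction `R(φ)`): for `t ≥ k ≥ 2` and any colouring
`φ` of the `(k-1)`-subsets with `t-k+1` colours, the `k`-uniform hypergraph whose
edges are the `k`-sets `{v₁ < v₂ < …}` with `φ(e ∖ {v₁}) ≠ φ(e ∖ {v₂})` (here `v₁, v₂`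
are the two smallest elements of `e`) contains no clique on `t` vertices. -/
theorem stmt_17 (k t : ℕ) (hk : 2 ≤ k) (hkt : k ≤ t)
    (φ : Finset ℕ → Fin (t - k + 1)) :
    ¬ ∃ S : Finset ℕ, S.card = t ∧
        ∀ e ∈ Finset.powersetCard k S,
          ∃ v₁ ∈ e, ∃ v₂ ∈ e, v₁ < v₂ ∧ (∀ u ∈ e, v₁ ≤ u) ∧
            (∀ u ∈ e, u ≠ v₁ → v₂ ≤ u) ∧ φ (e.erase v₁) ≠ φ (e.erase v₂) := by
  rintro ⟨S, hS, hedge⟩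
  let m := t - k + 1
  have hm : m = t - k + 1 := rfl
  have hmt : m + 1 ≤ t := by omega
  let f : Fin t → ℕ := fun i => (S.orderIsoOfFin hS i : ℕ)
  have hfS : ∀ i, f i ∈ S := fun i => (S.orderIsoOfFin hS i).2
  have hfmono : StrictMono f := fun a b h =>
    Subtype.coe_lt_coe.mpr ((S.orderIsoOfFin hS).strictMono h)
  -- the top k-2 elements
  let z : Finset ℕ := (Finset.univ : Finset (Fin (k-2))).image
    (fun a => f ⟨m + 1 + a.val, by have := a.isLt; omega⟩)
  have hzcard : z.card = k - 2 := by
    rw [Finset.card_image_of_injective _ ?_, Finset.card_univ, Fintype.card_fin]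
    intro a b hab
    have := hfmono.injective hab
    have := Fin.mk.injEq .. ▸ this
    exact Fin.ext (by omega)
  have hzgt : ∀ c : Fin (m+1), ∀ x ∈ z, f ⟨c, by omega⟩ < x := by
    intro c x hx
    simp only [z, Finset.mem_image] at hx
    obtain ⟨a, _, rfl⟩ := hx
    exact hfmono (by simp [Fin.lt_def]; omega)
  have hzS : z ⊆ S := by
    intro x hx
    simp only [z, Finset.mem_image] at hx
    obtain ⟨a, _, rfl⟩ := hx
    exact hfS _
  -- pigeonhole
  obtain ⟨i, j, hij, hφ⟩ := Fintype.exists_ne_map_eq_of_card_lt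
    (fun c : Fin (m+1) => φ (insert (f ⟨c, by omega⟩) z)) (by simp; omega)
  -- wlog i < j
  wlog hlt : i < j generalizing i j
  · exact this j i hij.symm hφ.symm (by omega)
  have hit : (i : ℕ) < t := by omega
  have hjt : (j : ℕ) < t := by omega
  have hfij : f ⟨i, hit⟩ < f ⟨j, hjt⟩ := hfmono (Fin.mk_lt_mk.mpr (show (i:ℕ) < (j:ℕ) from hlt))
  have hfjz : f ⟨j, hjt⟩ ∉ z := fun h => lt_irrefl _ (hzgt j _ h)
  have hfiz : f ⟨i, hit⟩ ∉ z := fun h => lt_irrefl _ (hzgt i _ h)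
  have hfimem : f ⟨i, hit⟩ ∉ insert (f ⟨j, hjt⟩) z := by
    simp only [Finset.mem_insert]
    rintro (h | h)
    · exact absurd h (ne_of_lt hfij)
    · exact hfiz h
  have hecard : (insert (f ⟨i, hit⟩) (insert (f ⟨j, hjt⟩) z)).card = k := by
    rw [Finset.card_insert_of_notMem hfimem, Finset.card_insert_of_notMem hfjz, hzcard]
    omega
  have heS : insert (f ⟨i, hit⟩) (insert (f ⟨j, hjt⟩) z) ⊆ S := by
    intro x hx
    simp only [Finset.mem_insert] at hx
    rcases hx with rfl | rfl | hx
    · exact hfS _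
    · exact hfS _
    · exact hzS hx
  obtain ⟨v₁, hv₁e, v₂, hv₂e, hv12, hmin1, hmin2, hne⟩ :=
    hedge _ (Finset.mem_powersetCard.mpr ⟨heS, hecard⟩)
  have hfile : ∀ u ∈ insert (f ⟨i, hit⟩) (insert (f ⟨j, hjt⟩) z), f ⟨i, hit⟩ ≤ u := by
    intro u hu
    simp only [Finset.mem_insert] at hu
    rcases hu with rfl | rfl | hu
    · exact le_refl _
    · exact le_of_lt hfij
    · exact le_of_lt (hzgt i u hu)
  have hv1 : v₁ = f ⟨i, hit⟩ :=
    le_antisymm (hmin1 _ (by simp)) (hfile v₁ hv₁e)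
  have hv2 : v₂ = f ⟨j, hjt⟩ := by
    refine le_antisymm (hmin2 _ (by simp) ?_) ?_
    · rw [hv1]; exact ne_of_gt hfij
    · simp only [Finset.mem_insert] at hv₂e
      rcases hv₂e with rfl | rfl | hv₂e
      · exact absurd hv1.symm (ne_of_lt (hv1 ▸ hv12))
      · exact le_refl _
      · exact le_of_lt (hzgt j v₂ hv₂e)
  rw [hv1, hv2] at hne
  rw [Finset.erase_insert hfimem,
    Finset.erase_insert_of_ne (ne_of_lt hfij), Finset.erase_insert hfjz] at hne
  exact hne hφ.symm
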